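/- If the leader gradient descent algorithm starting at r terminates at a vector c ∈ C after w = wt(r̄) steps, each changing a single coordinate and strictly decreasing the coset leader weight, then c is a closest codeword to r: d(r, c) = wt(r̄) ≤ d(r, c') for all c' ∈ C. -/

import Mathlib

/-- The minimal Hamming weight of an element of the coset `y + C`. -/
noncomputable def leaderWeight {n : ℕ} (C : Submodule (ZMod 2) (Fin n → ZMod 2))
    (y : Fin n → ZMod 2) : ℕ :=
  sInf {w : ℕ | ∃ v : Fin n → ZMod 2, v - y ∈ C ∧ hammingNorm v = w}

lemma leaderWeight_le {n : ℕ} (C : Submodule (ZMod 2) (Fin n → ZMod 2))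
    (r c' : Fin n → ZMod 2) (hc' : c' ∈ C) :
    leaderWeight C r ≤ hammingDist r c' := by
  apply Nat.sInf_le
  exact ⟨r - c', by simpa using C.neg_mem hc', by rw [hammingDist_comm, hammingDist_eq_hammingNorm, neg_add_eq_sub]⟩

/-- If the leader GDDA starting at `r` terminates at a codeword `c` after
`w = leaderWeight C r` steps, each changing one coordinate and strictly
decreasing the coset leader weight, then `c` is a closest codeword to `r`. -/
theorem leader_gdda_correct (n : ℕ) (C : Submodule (ZMod 2) (Fin n → ZMod 2))
    (r c : Fin n → ZMod 2) (f : ℕ → (Fin n → ZMod 2))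
    (h0 : f 0 = r) (hend : f (leaderWeight C r) = c) (hc : c ∈ C)
    (hstep : ∀ j < leaderWeight C r, hammingDist (f j) (f (j + 1)) = 1 ∧
      leaderWeight C (f (j + 1)) = leaderWeight C (f j) - 1) :
    hammingDist r c = leaderWeight C r ∧
      ∀ c' ∈ C, hammingDist r c ≤ hammingDist r c' := by
  have key : ∀ k ≤ leaderWeight C r, hammingDist (f 0) (f k) ≤ k := by
    intro k hk
    induction k with
    | zero => simp
    | succ m ih =>
      have hm : m < leaderWeight C r := Nat.lt_of_succ_le hk
      calc hammingDist (f 0) (f (m + 1))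
          ≤ hammingDist (f 0) (f m) + hammingDist (f m) (f (m + 1)) :=
            hammingDist_triangle _ _ _
        _ ≤ m + 1 := by
            rw [(hstep m hm).1]
            exact Nat.add_le_add_right (ih hm.le) 1
  have h1 : hammingDist r c ≤ leaderWeight C r := by
    have := key (leaderWeight C r) le_rfl
    rwa [h0, hend] at this
  have h2 : leaderWeight C r ≤ hammingDist r c := leaderWeight_le C r c hc
  have heq : hammingDist r c = leaderWeight C r := le_antisymm h1 h2
  exact ⟨heq, fun c' hc' => heq ▸ leaderWeight_le C r c' hc'⟩
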